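/- Let f : [0,1] → [0,1] be continuous with zero topological entropy, and let x ∈ [0,1] with ω_f(x) infinite. If U is an open subinterval of [0,1] with U ∩ ω_f(x) ≠ ∅, then there exists n ≥ 0 such that fⁿ(U) contains a periodic point of f. -/

import Mathlib

open Filter Topology

/-- The unit interval `[0,1]` as a subtype of `ℝ`. -/
abbrev UI := Set.Icc (0 : ℝ) 1

/-- The ω-limit set of a point `x` under `f`: the set of limit points of the orbit. -/
def omegaSet (f : UI → UI) (x : UI) : Set UI :=
  {y | ∃ φ : ℕ → ℕ, StrictMono φ ∧ Tendsto (fun n => f^[φ n] x) atTop (𝓝 y)}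

/-- `p` is a periodic point of `f`. -/
def IsPerPt (f : UI → UI) (p : UI) : Prop := ∃ n ≥ 1, f^[n] p = p

/-- If the subsequence along times `c + m*s` of the orbit of `x` converges, then the
ω-limit set of `x` is finite (contained in the `m` images of the limit). -/
lemma aux_omega_finite (f : UI → UI) (hf : Continuous f) (x : UI) (c m : ℕ) (hm : 0 < m)
    (β : UI) (hconv : Tendsto (fun s => (f^[m])^[s] (f^[c] x)) atTop (𝓝 β)) :
    (omegaSet f x).Finite := by
  apply (Set.finite_range (fun r : Fin m => f^[(r : ℕ)] β)).subset
  rintro w ⟨ψ, hψ, hw⟩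
  -- pigeonhole on residues of `ψ n - c` mod `m`
  have hpig : ∃ r < m, {n : ℕ | c ≤ ψ n ∧ (ψ n - c) % m = r}.Infinite := by
    by_contra hcon
    push_neg at hcon
    have hfin : {n : ℕ | c ≤ ψ n}.Finite := by
      have hsub : {n : ℕ | c ≤ ψ n} ⊆
          ⋃ r ∈ Finset.range m, {n : ℕ | c ≤ ψ n ∧ (ψ n - c) % m = r} := by
        intro n hn
        have : (ψ n - c) % m < m := Nat.mod_lt _ hm
        exact Set.mem_biUnion (Finset.mem_range.mpr this) ⟨hn, rfl⟩
      refine Set.Finite.subset (Set.Finite.biUnion (Finset.range m).finite_toSet ?_) hsub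
      intro r hr
      have hrm : r < m := Finset.mem_range.mp hr
      exact hcon r hrm
    have : (Set.Ici c).Finite := by
      refine hfin.subset ?_
      intro n hn
      exact le_trans hn (hψ.le_apply)
    exact Set.Ici_infinite c this
  obtain ⟨r, hrm, hS⟩ := hpig
  obtain ⟨θ, hθ, hθP⟩ := extraction_of_frequently_atTop
    (Nat.frequently_atTop_iff_infinite.mpr hS)
  refine ⟨⟨r, hrm⟩, ?_⟩
  have h1 : Tendsto (fun n => f^[ψ (θ n)] x) atTop (𝓝 w) := hw.comp hθ.tendsto_atTop
  have key : ∀ n, f^[ψ (θ n)] x = f^[r] ((f^[m])^[(ψ (θ n) - c) / m] (f^[c] x)) := by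
    intro n
    obtain ⟨hcle, hmod⟩ := hθP n
    have hdm : m * ((ψ (θ n) - c) / m) + (ψ (θ n) - c) % m = ψ (θ n) - c :=
      Nat.div_add_mod _ m
    have hdecomp : ψ (θ n) = r + (m * ((ψ (θ n) - c) / m) + c) := by omega
    calc f^[ψ (θ n)] x = f^[r + (m * ((ψ (θ n) - c) / m) + c)] x := by rw [← hdecomp]
      _ = f^[r] (f^[m * ((ψ (θ n) - c) / m) + c] x) := Function.iterate_add_apply _ _ _ _
      _ = f^[r] (f^[m * ((ψ (θ n) - c) / m)] (f^[c] x)) := by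
          rw [Function.iterate_add_apply]
      _ = f^[r] ((f^[m])^[(ψ (θ n) - c) / m] (f^[c] x)) := by rw [Function.iterate_mul]
  have h2 : Tendsto (fun n => (ψ (θ n) - c) / m) atTop atTop := by
    refine tendsto_atTop_atTop.mpr fun N => ⟨c + m * N, fun n hn => ?_⟩
    have h3 : n ≤ ψ (θ n) := le_trans hθ.le_apply hψ.le_apply
    have : m * N ≤ ψ (θ n) - c := by omega
    exact (Nat.le_div_iff_mul_le hm).mpr (le_trans (le_of_eq (mul_comm N m)) this)
  have h3 : Tendsto (fun n => f^[r] ((f^[m])^[(ψ (θ n) - c) / m] (f^[c] x)))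
      atTop (𝓝 (f^[r] β)) :=
    ((hf.iterate r).continuousAt.tendsto).comp (hconv.comp h2)
  simp only [key] at h1
  exact tendsto_nhds_unique h3 h1

theorem stmt_2 (f : UI → UI) (hf : Continuous f)
    (h0 : Dynamics.coverEntropy f Set.univ = 0)
    (x : UI) (hinf : (omegaSet f x).Infinite)
    (a b : UI) (hU : (Set.Ioo a b ∩ omegaSet f x).Nonempty) :
    ∃ n : ℕ, ∃ p ∈ f^[n] '' Set.Ioo a b, IsPerPt f p := by
  obtain ⟨y, hyU, hyω⟩ := hU
  obtain ⟨φ, hφ, hφc⟩ := hyω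
  -- `Ioo a b` is open in `UI`
  have hIoo_eq : (Set.Ioo a b : Set UI) = Subtype.val ⁻¹' Set.Ioo (a : ℝ) (b : ℝ) := by
    ext t
    simp [Set.mem_Ioo, ← Subtype.coe_lt_coe]
  have hUopen : IsOpen (Set.Ioo a b : Set UI) := by
    rw [hIoo_eq]; exact isOpen_Ioo.preimage continuous_subtype_val
  have hev : ∀ᶠ n in atTop, f^[φ n] x ∈ Set.Ioo a b :=
    hφc.eventually (hUopen.mem_nhds hyU)
  obtain ⟨n₁, hn₁⟩ := hev.exists
  obtain ⟨n₂, hn₂, hn₁₂⟩ := (hev.and (eventually_gt_atTop n₁)).exists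
  set c := φ n₁ with hc
  set d := φ n₂ with hd
  have hcd : c < d := hφ hn₁₂
  set m := d - c with hmdef
  have hm : 0 < m := Nat.sub_pos_of_lt hcd
  set t0 : UI := f^[c] x with ht0def
  have ht0 : t0 ∈ Set.Ioo a b := hn₁
  have hshift : f^[m] t0 ∈ Set.Ioo a b := by
    have : f^[m] t0 = f^[d] x := by
      rw [ht0def, ← Function.iterate_add_apply]
      congr 1
      omega
    rw [this]; exact hn₂
  -- the chain of images
  set A : ℕ → Set UI := fun k => f^[m * k] '' Set.Ioo a b with hA
  set W : Set UI := ⋃ k, A k with hW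
  by_cases hfix : ∃ p ∈ W, f^[m] p = p
  · obtain ⟨p, hpW, hp⟩ := hfix
    obtain ⟨k, hk⟩ := Set.mem_iUnion.mp hpW
    exact ⟨m * k, p, hk, m, hm, hp⟩
  · exfalso
    push_neg at hfix
    -- membership facts
    have hUA0 : (Set.Ioo a b : Set UI) ⊆ A 0 := by
      intro t ht
      refine ⟨t, ht, ?_⟩
      simp
    have huW : ∀ s : ℕ, (f^[m])^[s] t0 ∈ W := by
      intro s
      refine Set.mem_iUnion.mpr ⟨s, ⟨t0, ht0, ?_⟩⟩
      rw [Function.iterate_mul]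
    -- W is preconnected
    have hIooPre : IsPreconnected (Set.Ioo a b : Set UI) := by
      have himg : Subtype.val '' (Set.Ioo a b : Set UI) = Set.Ioo (a : ℝ) (b : ℝ) := by
        ext z
        constructor
        · rintro ⟨t, ht, rfl⟩
          exact ⟨Subtype.coe_lt_coe.mpr ht.1, Subtype.coe_lt_coe.mpr ht.2⟩
        · rintro ⟨hz1, hz2⟩
          have hz : z ∈ Set.Icc (0 : ℝ) 1 :=
            ⟨le_trans a.2.1 hz1.le, le_trans hz2.le b.2.2⟩
          exact ⟨⟨z, hz⟩, ⟨Subtype.coe_lt_coe.mp hz1, Subtype.coe_lt_coe.mp hz2⟩, rfl⟩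
      have := (Topology.IsInducing.subtypeVal).isPreconnected_image
        (s := (Set.Ioo a b : Set UI))
      rw [himg] at this
      exact this.mp isPreconnected_Ioo
    have hApre : ∀ k, IsPreconnected (A k) := fun k =>
      hIooPre.image _ (hf.iterate (m * k)).continuousOn
    have hAchain : ∀ k, (A k ∩ A (k + 1)).Nonempty := by
      intro k
      refine ⟨f^[m * k] (f^[m] t0), ⟨f^[m] t0, hshift, rfl⟩, ⟨t0, ht0, ?_⟩⟩
      rw [Nat.mul_succ, Function.iterate_add_apply]
    have hWpre : IsPreconnected W := IsPreconnected.iUnion_of_chain hApre hAchain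
    -- the displacement function
    set h : UI → ℝ := fun t => (f^[m] t : ℝ) - (t : ℝ) with hh
    have hhcont : Continuous h :=
      (continuous_subtype_val.comp (hf.iterate m)).sub continuous_subtype_val
    have hne : ∀ t ∈ W, h t ≠ 0 := by
      intro t htW h0'
      exact hfix t htW (Subtype.ext (by simpa [hh, sub_eq_zero] using h0'))
    -- sign dichotomy
    have hdich : (∀ t ∈ W, 0 < h t) ∨ (∀ t ∈ W, h t < 0) := by
      by_contra hcon
      push_neg at hcon
      obtain ⟨⟨t₁, ht₁W, ht₁⟩, t₂, ht₂W, ht₂⟩ := hcon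
      have ht₁' : h t₁ < 0 := lt_of_le_of_ne ht₁ (hne t₁ ht₁W)
      have ht₂' : 0 < h t₂ := lt_of_le_of_ne ht₂ (Ne.symm (hne t₂ ht₂W))
      have : (0 : ℝ) ∈ h '' W :=
        hWpre.intermediate_value ht₁W ht₂W hhcont.continuousOn ⟨ht₁'.le, ht₂'.le⟩
      obtain ⟨t, htW, ht⟩ := this
      exact hne t htW ht
    set u : ℕ → UI := fun s => (f^[m])^[s] t0 with hu
    have husucc : ∀ s, u (s + 1) = f^[m] (u s) := fun s =>
      Function.iterate_succ_apply' _ _ _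
    rcases hdich with hpos | hneg
    · -- increasing case
      have hmono : Monotone fun s => (u s : ℝ) := by
        refine monotone_nat_of_le_succ fun s => ?_
        have := hpos (u s) (huW s)
        rw [husucc s]
        simp only [hh] at this
        linarith
      have hbdd : BddAbove (Set.range fun s => (u s : ℝ)) := by
        refine ⟨1, ?_⟩
        rintro _ ⟨s, rfl⟩
        exact (u s).2.2
      have hconv' : Tendsto (fun s => (u s : ℝ)) atTop (𝓝 (⨆ s, (u s : ℝ))) :=
        tendsto_atTop_ciSup hmono hbdd
      have hβmem : (⨆ s, (u s : ℝ)) ∈ Set.Icc (0 : ℝ) 1 :=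
        ⟨le_trans (u 0).2.1 (le_ciSup hbdd 0), ciSup_le fun s => (u s).2.2⟩
      have hconv : Tendsto u atTop (𝓝 ⟨_, hβmem⟩) := tendsto_subtype_rng.mpr hconv'
      exact hinf (aux_omega_finite f hf x c m hm _ hconv)
    · -- decreasing case
      have hmono : Antitone fun s => (u s : ℝ) := by
        refine antitone_nat_of_succ_le fun s => ?_
        have := hneg (u s) (huW s)
        rw [husucc s]
        simp only [hh] at this
        linarith
      have hbdd : BddBelow (Set.range fun s => (u s : ℝ)) := by
        refine ⟨0, ?_⟩
        rintro _ ⟨s, rfl⟩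
        exact (u s).2.1
      have hconv' : Tendsto (fun s => (u s : ℝ)) atTop (𝓝 (⨅ s, (u s : ℝ))) :=
        tendsto_atTop_ciInf hmono hbdd
      have hβmem : (⨅ s, (u s : ℝ)) ∈ Set.Icc (0 : ℝ) 1 :=
        ⟨le_ciInf fun s => (u s).2.1, le_trans (ciInf_le hbdd 0) (u 0).2.2⟩
      have hconv : Tendsto u atTop (𝓝 ⟨_, hβmem⟩) := tendsto_subtype_rng.mpr hconv'
      exact hinf (aux_omega_finite f hf x c m hm _ hconv)
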